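/- For every integer n ≥ 1, the coefficient c(V₁⁽⁸⁾;n) is odd if and only if 4n − 1 = p^{4a+1}·m² for some prime p, integer a ≥ 0, and positive integer m with p ∤ m. -/

import Mathlib

open PowerSeries Finset
open scoped Classical

noncomputable section

/-- The generalized q-Pochhammer symbol `(a;b)_n = ∏_{j=0}^{n-1} (1 - a·bʲ)`
in the ring `ℤ⟦q⟧` of formal power series (here the variable `q` is `PowerSeries.X`). -/
def qPoch (a b : PowerSeries ℤ) (n : ℕ) : PowerSeries ℤ :=
  ∏ j ∈ Finset.range n, (1 - a * b ^ j)

/-- Division of formal power series; this is genuine division whenever the denominator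
has constant coefficient `1`. -/
def psDiv (f g : PowerSeries ℤ) : PowerSeries ℤ :=
  f * PowerSeries.invOfUnit g 1

/-- The coefficientwise sum of a family of formal power series. -/
def psSum (f : ℕ → PowerSeries ℤ) : PowerSeries ℤ :=
  PowerSeries.mk fun n => ∑' k, PowerSeries.coeff n (f k)

/-- The eighth order mock theta function
`V₁⁽⁸⁾(q) = ∑_{n≥0} q^{(n+1)²}·(−q;q²)_n / (q;q²)_{n+1}`. -/
def mockV18 : PowerSeries ℤ :=
  psSum fun n => psDiv (X ^ ((n + 1) ^ 2) * qPoch (-X) (X ^ 2) n) (qPoch X (X ^ 2) (n + 1))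

namespace MockAux

/-- geometric series `∑_k X^(m k)` over `ZMod 2`. -/
def geom (m : ℕ) : PowerSeries (ZMod 2) := PowerSeries.mk fun n => if m ∣ n then 1 else 0

lemma coeff_geom (m d : ℕ) : coeff d (geom m) = if m ∣ d then 1 else 0 := by
  simp [geom]

lemma one_sub_X_pow_mul_geom (m : ℕ) (hm : 0 < m) :
    (1 - X ^ m) * geom m = 1 := by
  ext n
  rw [sub_mul, one_mul, map_sub, coeff_X_pow_mul', coeff_geom]
  rcases eq_or_ne n 0 with rfl | hn
  · simp [hm.ne']
  · rw [PowerSeries.coeff_one, if_neg hn]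
    by_cases h : m ≤ n
    · rw [if_pos h, coeff_geom]
      have : m ∣ n ↔ m ∣ n - m := by
        constructor
        · intro hd; exact (Nat.dvd_sub hd dvd_rfl)
        · intro hd
          have := Nat.dvd_add hd (dvd_refl m)
          rwa [Nat.sub_add_cancel h] at this
      by_cases hd : m ∣ n
      · rw [if_pos hd, if_pos (this.mp hd), sub_self]
      · rw [if_neg hd, if_neg (fun c => hd (this.mpr c)), sub_self]
    · rw [if_neg h]
      have hd : ¬ m ∣ n := fun c => h (Nat.le_of_dvd (Nat.pos_of_ne_zero hn) c)
      rw [if_neg hd, sub_zero]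

/-- the q-Pochhammer `(X; X²)_k` over `ZMod 2`. -/
def Q2 (k : ℕ) : PowerSeries (ZMod 2) := ∏ j ∈ Finset.range k, (1 - X * (X ^ 2) ^ j)

lemma constantCoeff_Q2 (k : ℕ) : constantCoeff (Q2 k) = 1 := by
  simp [Q2, map_prod]

lemma Q2_ne_zero (k : ℕ) : Q2 k ≠ 0 := by
  intro h
  have := constantCoeff_Q2 k
  rw [h, map_zero] at this
  exact one_ne_zero this.symm

lemma map_qPoch_X (k : ℕ) :
    PowerSeries.map (Int.castRingHom (ZMod 2)) (qPoch X (X ^ 2) k) = Q2 k := by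
  simp [qPoch, Q2, map_prod, map_sub, map_mul, map_pow, PowerSeries.map_X, map_one]

lemma neg_X_eq : (-X : PowerSeries (ZMod 2)) = X := by
  ext n
  rw [map_neg, CharTwo.neg_eq]

lemma map_qPoch_negX (k : ℕ) :
    PowerSeries.map (Int.castRingHom (ZMod 2)) (qPoch (-X) (X ^ 2) k) = Q2 k := by
  simp only [qPoch, Q2, map_prod, map_sub, map_mul, map_pow, PowerSeries.map_X, map_one,
    map_neg, neg_X_eq]

lemma Q2_succ (k : ℕ) : Q2 (k + 1) = Q2 k * (1 - X ^ (2 * k + 1)) := by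
  rw [Q2, Finset.prod_range_succ, ← Q2]
  congr 1
  rw [← pow_mul, pow_add, pow_one, mul_comm (X ^ (2*k)) X, pow_mul]

lemma map_summand (k : ℕ) :
    PowerSeries.map (Int.castRingHom (ZMod 2))
      (psDiv (X ^ ((k + 1) ^ 2) * qPoch (-X) (X ^ 2) k) (qPoch X (X ^ 2) (k + 1)))
      = X ^ ((k + 1) ^ 2) * geom (2 * k + 1) := by
  set φ := PowerSeries.map (Int.castRingHom (ZMod 2))
  have hc : constantCoeff (qPoch X (X ^ 2) (k + 1)) = ((1 : ℤˣ) : ℤ) := by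
    simp [qPoch, map_prod]
  have h1 : qPoch X (X ^ 2) (k + 1) * invOfUnit (qPoch X (X ^ 2) (k + 1)) 1 = 1 :=
    PowerSeries.mul_invOfUnit _ 1 hc
  have h2 : psDiv (X ^ ((k + 1) ^ 2) * qPoch (-X) (X ^ 2) k) (qPoch X (X ^ 2) (k + 1)) *
      qPoch X (X ^ 2) (k + 1) = X ^ ((k + 1) ^ 2) * qPoch (-X) (X ^ 2) k := by
    rw [psDiv, mul_assoc, mul_comm (invOfUnit _ _), h1, mul_one]
  have h3 := congrArg φ h2
  rw [map_mul, map_mul, map_pow, PowerSeries.map_X, map_qPoch_X, map_qPoch_negX] at h3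
  rw [Q2_succ, ← mul_assoc] at h3
  -- h3 : φ S * Q2 k * (1 - X^(2k+1)) = X^e * Q2 k
  have h4 := congrArg (· * geom (2 * k + 1)) h3
  rw [mul_assoc (φ _ * Q2 k), one_sub_X_pow_mul_geom _ (by omega), mul_one] at h4
  -- h4 : φ S * Q2 k = X^e * Q2 k * geom
  have h5 : X ^ ((k + 1) ^ 2) * Q2 k * geom (2 * k + 1)
      = X ^ ((k + 1) ^ 2) * geom (2 * k + 1) * Q2 k := by ring
  rw [h5] at h4
  exact mul_right_cancel₀ (Q2_ne_zero k) h4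

lemma coeff_summand_zero (k n : ℕ) (h : n < (k + 1) ^ 2) :
    coeff n (psDiv (X ^ ((k + 1) ^ 2) * qPoch (-X) (X ^ 2) k) (qPoch X (X ^ 2) (k + 1))) = 0 := by
  rw [psDiv, mul_assoc, coeff_X_pow_mul', if_neg (by omega)]

lemma coeff_mockV18 (n : ℕ) :
    coeff n mockV18 = ∑ k ∈ Finset.range n,
      coeff n (psDiv (X ^ ((k + 1) ^ 2) * qPoch (-X) (X ^ 2) k) (qPoch X (X ^ 2) (k + 1))) := by
  rw [mockV18, psSum, coeff_mk]
  refine tsum_eq_sum fun k hk => coeff_summand_zero k n ?_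
  rw [Finset.mem_range, not_lt] at hk
  nlinarith

lemma zmod2_one_iff (x : ZMod 2) : x = 1 ↔ ¬ x = 0 := by revert x; decide

lemma int_odd_iff (z : ℤ) : Odd z ↔ ((z : ZMod 2) = 1) := by
  rw [← Int.not_even_iff_odd, even_iff_two_dvd, zmod2_one_iff,
    ZMod.intCast_zmod_eq_zero_iff_dvd]
  norm_num

lemma nat_odd_iff (A : ℕ) : Odd A ↔ ((A : ZMod 2) = 1) := by
  rw [← Nat.not_even_iff_odd, even_iff_two_dvd, zmod2_one_iff,
    ZMod.natCast_eq_zero_iff]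

lemma odd_coeff_iff (n : ℕ) :
    Odd (coeff n mockV18) ↔
      Odd (((Finset.range n).filter
        fun k => (k + 1) ^ 2 ≤ n ∧ (2 * k + 1) ∣ n - (k + 1) ^ 2).card) := by
  rw [int_odd_iff, nat_odd_iff, coeff_mockV18]
  have : ((∑ k ∈ Finset.range n,
      coeff n (psDiv (X ^ ((k + 1) ^ 2) * qPoch (-X) (X ^ 2) k) (qPoch X (X ^ 2) (k + 1))) : ℤ)
      : ZMod 2)
      = ∑ k ∈ Finset.range n,
        (if (k + 1) ^ 2 ≤ n ∧ (2 * k + 1) ∣ n - (k + 1) ^ 2 then (1 : ZMod 2) else 0) := by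
    push_cast
    refine Finset.sum_congr rfl fun k _ => ?_
    have : ((coeff n (psDiv (X ^ ((k + 1) ^ 2) * qPoch (-X) (X ^ 2) k)
        (qPoch X (X ^ 2) (k + 1))) : ℤ) : ZMod 2)
        = coeff n (PowerSeries.map (Int.castRingHom (ZMod 2))
          (psDiv (X ^ ((k + 1) ^ 2) * qPoch (-X) (X ^ 2) k) (qPoch X (X ^ 2) (k + 1)))) := by
      rw [PowerSeries.coeff_map]; rfl
    rw [this, map_summand, coeff_X_pow_mul']
    by_cases h1 : (k + 1) ^ 2 ≤ n
    · rw [if_pos h1, coeff_geom]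
      by_cases h2 : (2 * k + 1) ∣ n - (k + 1) ^ 2
      · rw [if_pos h2, if_pos ⟨h1, h2⟩]
      · rw [if_neg h2, if_neg (by tauto)]
    · rw [if_neg h1, if_neg (by tauto)]
  rw [this, Finset.sum_boole]

lemma count_eq_small (n : ℕ) (hn : 1 ≤ n) :
    ((Finset.range n).filter
        fun k => (k + 1) ^ 2 ≤ n ∧ (2 * k + 1) ∣ n - (k + 1) ^ 2).card
      = ((4 * n - 1).divisors.filter fun d => d * d < 4 * n - 1).card := by
  set M := 4 * n - 1 with hM
  have hM3 : M % 4 = 3 := by omega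
  apply Finset.card_nbij' (fun k => 2 * k + 1) (fun d => (d - 1) / 2)
  · intro k hk
    simp only [Finset.mem_coe, Finset.mem_filter, Finset.mem_range] at hk
    obtain ⟨hkn, hsq, c, hc⟩ := hk
    have hn4 : M = (2 * k + 1) * (2 * k + 3 + 4 * c) := by
      have h4 : 4 * n = 4 * (k + 1) ^ 2 + 4 * ((2 * k + 1) * c) := by omega
      have h5 : 4 * (k + 1) ^ 2 + 4 * ((2 * k + 1) * c)
          = (2 * k + 1) * (2 * k + 3 + 4 * c) + 1 := by ring
      omega
    simp only [Finset.mem_coe, Finset.mem_filter, Nat.mem_divisors]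
    refine ⟨⟨⟨_, hn4⟩, by omega⟩, ?_⟩
    have h6 : (2 * k + 1) * (2 * k + 1) < (2 * k + 1) * (2 * k + 3 + 4 * c) := by
      nlinarith
    omega
  · intro d hd
    simp only [Finset.mem_coe, Finset.mem_filter, Nat.mem_divisors] at hd
    obtain ⟨⟨⟨e, he⟩, hM0⟩, hdd⟩ := hd
    have hModd : M % 2 = 1 := by omega
    have hdodd : d % 2 = 1 := by
      rcases Nat.even_or_odd d with h | h
      · obtain ⟨t, rfl⟩ := h
        have h2 : 2 ∣ M := ⟨t * e, by rw [he]; ring⟩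
        omega
      · obtain ⟨t, rfl⟩ := h; omega
    have heodd : e % 2 = 1 := by
      rcases Nat.even_or_odd e with h | h
      · obtain ⟨t, rfl⟩ := h
        have h2 : 2 ∣ M := ⟨d * t, by rw [he]; ring⟩
        omega
      · obtain ⟨t, rfl⟩ := h; omega
    set k := (d - 1) / 2 with hk
    have hdk : d = 2 * k + 1 := by omega
    have hde : d < e := by
      rcases Nat.lt_or_ge d e with h | h
      · exact h
      · exfalso
        have h1 : e * e ≤ d * e := Nat.mul_le_mul_right e h
        have h2 : d * e ≤ d * d := Nat.mul_le_mul_left d h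
        omega
    have hde2 : d + 2 ≤ e := by omega
    set r := e - (d + 2) with hr
    have her : e = d + 2 + r := by omega
    have hMeq : M = (2 * k + 1) * (2 * k + 3 + r) := by
      rw [he, hdk, her, hdk]
    have h4n : 4 * n = (2 * k + 1) * (2 * k + 3 + r) + 1 := by omega
    have hge : (2 * k + 1) * (2 * k + 3) ≤ (2 * k + 1) * (2 * k + 3 + r) :=
      Nat.mul_le_mul_left _ (by omega)
    have hsq : (k + 1) ^ 2 ≤ n := by nlinarith
    have hdvd : (2 * k + 1) ∣ n - (k + 1) ^ 2 := by
      have h4 : 4 * (n - (k + 1) ^ 2) = (2 * k + 1) * r := by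
        have expand : (2 * k + 1) * (2 * k + 3 + r)
            = 4 * (k + 1) ^ 2 + (2 * k + 1) * r - 1 := by
          have : (2 * k + 1) * (2 * k + 3 + r) + 1
              = 4 * (k + 1) ^ 2 + (2 * k + 1) * r := by ring
          omega
        omega
      have hco : Nat.Coprime (2 * k + 1) 4 := by
        have h2 : Nat.Coprime (2 * k + 1) 2 :=
          Nat.coprime_two_right.mpr ⟨k, by ring⟩
        have := h2.pow_right 2
        norm_num at this
        exact this
      exact hco.dvd_of_dvd_mul_left ⟨r, h4⟩
    have hkn : k < n := by nlinarith
    simp only [Finset.mem_coe, Finset.mem_filter, Finset.mem_range]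
    exact ⟨hkn, hsq, hdvd⟩
  · intro k _; dsimp only; omega
  · intro d hd
    simp only [Finset.mem_coe, Finset.mem_filter, Nat.mem_divisors] at hd
    obtain ⟨⟨⟨e, he⟩, hM0⟩, hdd⟩ := hd
    have hModd : M % 2 = 1 := by omega
    have hdodd : d % 2 = 1 := by
      rcases Nat.even_or_odd d with h | h
      · obtain ⟨t, rfl⟩ := h
        have h2 : 2 ∣ M := ⟨t * e, by rw [he]; ring⟩
        omega
      · obtain ⟨t, rfl⟩ := h; omega
    dsimp only; omega

lemma not_square_of_mod_four (M : ℕ) (h3 : M % 4 = 3) (d : ℕ) : d * d ≠ M := by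
  intro h
  have h4 : d * d % 4 = d % 4 * (d % 4) % 4 := Nat.mul_mod d d 4
  have h5 : d % 4 = 0 ∨ d % 4 = 1 ∨ d % 4 = 2 ∨ d % 4 = 3 := by omega
  rcases h5 with h5 | h5 | h5 | h5 <;> rw [h5] at h4 <;> omega

lemma card_divisors_eq_two_mul (M : ℕ) (h3 : M % 4 = 3) :
    M.divisors.card = 2 * (M.divisors.filter fun d => d * d < M).card := by
  have hM0 : M ≠ 0 := by omega
  have hsplit := Finset.card_filter_add_card_filter_not
    (s := M.divisors) (p := fun d => d * d < M)
  have hbij : (M.divisors.filter fun d => ¬ d * d < M).card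
      = (M.divisors.filter fun d => d * d < M).card := by
    apply Finset.card_nbij' (fun d => M / d) (fun d => M / d)
    · intro d hd
      simp only [Finset.mem_coe, Finset.mem_filter, Nat.mem_divisors, not_lt] at hd ⊢
      obtain ⟨⟨⟨e, he⟩, _⟩, hge⟩ := hd
      have hd0 : 0 < d := by
        rcases Nat.eq_zero_or_pos d with h | h
        · subst h; rw [zero_mul] at he; omega
        · exact h
      have he0 : 0 < e := by
        rcases Nat.eq_zero_or_pos e with h | h
        · exfalso; rw [h, mul_zero] at he; omega
        · exact h
      have hMd : M / d = e := by rw [he]; exact Nat.mul_div_cancel_left e hd0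
      have hne : d * d ≠ M := not_square_of_mod_four M h3 d
      have hlt : M < d * d := by omega
      have hed : e < d := by
        by_contra hc
        push_neg at hc
        have : d * d ≤ d * e := Nat.mul_le_mul_left d hc
        omega
      refine ⟨⟨⟨d, by rw [hMd, he]; ring⟩, hM0⟩, ?_⟩
      rw [hMd]
      have h1 : e * e < e * d := by
        have := Nat.mul_lt_mul_of_lt_of_le hed (le_refl e) he0
        nlinarith
      nlinarith [he]
    · intro d hd
      simp only [Finset.mem_coe, Finset.mem_filter, Nat.mem_divisors, not_lt] at hd ⊢
      obtain ⟨⟨⟨e, he⟩, _⟩, hlt⟩ := hd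
      have hd0 : 0 < d := by
        rcases Nat.eq_zero_or_pos d with h | h
        · subst h; rw [zero_mul] at he; omega
        · exact h
      have he0 : 0 < e := by
        rcases Nat.eq_zero_or_pos e with h | h
        · exfalso; rw [h, mul_zero] at he; omega
        · exact h
      have hMd : M / d = e := by rw [he]; exact Nat.mul_div_cancel_left e hd0
      have hed : d < e := by
        by_contra hc
        push_neg at hc
        have : d * e ≤ d * d := Nat.mul_le_mul_left d hc
        omega
      refine ⟨⟨⟨d, by rw [hMd, he]; ring⟩, hM0⟩, ?_⟩
      rw [hMd]
      nlinarith [he]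
    · intro d hd
      simp only [Finset.mem_coe, Finset.mem_filter, Nat.mem_divisors] at hd
      obtain ⟨⟨⟨e, he⟩, _⟩, _⟩ := hd
      have hd0 : 0 < d := by
        rcases Nat.eq_zero_or_pos d with h | h
        · subst h; rw [zero_mul] at he; omega
        · exact h
      have hMd : M / d = e := by rw [he]; exact Nat.mul_div_cancel_left e hd0
      have he0 : 0 < e := by
        rcases Nat.eq_zero_or_pos e with h | h
        · exfalso; rw [h, mul_zero] at he; omega
        · exact h
      dsimp only; rw [hMd, he, mul_comm]; exact Nat.mul_div_cancel_left d he0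
    · intro d hd
      simp only [Finset.mem_coe, Finset.mem_filter, Nat.mem_divisors] at hd
      obtain ⟨⟨⟨e, he⟩, _⟩, _⟩ := hd
      have hd0 : 0 < d := by
        rcases Nat.eq_zero_or_pos d with h | h
        · subst h; rw [zero_mul] at he; omega
        · exact h
      have hMd : M / d = e := by rw [he]; exact Nat.mul_div_cancel_left e hd0
      have he0 : 0 < e := by
        rcases Nat.eq_zero_or_pos e with h | h
        · exfalso; rw [h, mul_zero] at he; omega
        · exact h
      dsimp only; rw [hMd, he, mul_comm]; exact Nat.mul_div_cancel_left d he0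
  simp only [not_lt] at hsplit hbij
  omega

lemma sum_eq_one_extract {s : Finset ℕ} {g : ℕ → ℕ} (h : ∑ i ∈ s, g i = 1) :
    ∃ a ∈ s, g a = 1 ∧ ∀ b ∈ s, b ≠ a → g b = 0 := by
  have hex : ∃ a ∈ s, g a ≠ 0 := by
    by_contra hc
    push_neg at hc
    rw [Finset.sum_eq_zero hc] at h
    omega
  obtain ⟨a, ha, hga⟩ := hex
  have hsum := Finset.add_sum_erase s g ha
  have hga1 : 1 ≤ g a := Nat.pos_of_ne_zero hga
  have h0 : ∑ b ∈ s.erase a, g b = 0 := by omega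
  have hga2 : g a = 1 := by omega
  refine ⟨a, ha, hga2, fun b hb hba => ?_⟩
  exact (Finset.sum_eq_zero_iff).mp h0 b (Finset.mem_erase.mpr ⟨hba, hb⟩)

lemma v2_eq_zero_iff (e : ℕ) : (e + 1).factorization 2 = 0 ↔ e % 2 = 0 := by
  rw [Nat.factorization_eq_zero_iff]
  constructor
  · rintro (h | h | h)
    · exact absurd Nat.prime_two h
    · omega
    · omega
  · intro h; right; left; omega

lemma v2_eq_one_iff (e : ℕ) : (e + 1).factorization 2 = 1 ↔ e % 4 = 1 := by
  have hne : e + 1 ≠ 0 := by omega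
  have h1 := Nat.Prime.pow_dvd_iff_le_factorization (k := 1) Nat.prime_two hne
  have h2 := Nat.Prime.pow_dvd_iff_le_factorization (k := 2) Nat.prime_two hne
  norm_num at h1 h2
  omega

lemma sq_of_even_factorization (m' : ℕ) (h0 : m' ≠ 0)
    (h : ∀ q, Even (m'.factorization q)) : ∃ m, 0 < m ∧ m' = m ^ 2 := by
  refine ⟨∏ q ∈ m'.primeFactors, q ^ (m'.factorization q / 2), ?_, ?_⟩
  · exact Finset.prod_pos fun q hq => pow_pos (Nat.prime_of_mem_primeFactors hq).pos _
  · conv_lhs => rw [← Nat.factorization_prod_pow_eq_self h0]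
    rw [Finsupp.prod]
    rw [← Finset.prod_pow]
    refine Finset.prod_congr (by rw [Nat.support_factorization]) fun q hq => ?_
    rw [← pow_mul, Nat.div_mul_cancel ((h q).two_dvd)]

lemma card_divisors_prime_pow' {p : ℕ} (hp : p.Prime) (k : ℕ) :
    ((p ^ k).divisors).card = k + 1 := by
  rw [Nat.divisors_prime_pow hp, Finset.card_map, Finset.card_range]

lemma odd_card_divisors_sq (m : ℕ) (hm : 0 < m) : Odd ((m ^ 2).divisors.card) := by
  rw [Nat.card_divisors (pow_ne_zero 2 hm.ne')]
  refine Finset.prod_induction _ Odd (fun a b ha hb => ha.mul hb) odd_one fun q _ => ?_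
  rw [Nat.factorization_pow, Finsupp.smul_apply, smul_eq_mul]
  exact ⟨m.factorization q, by ring⟩

lemma small_odd_iff (M : ℕ) (h3 : M % 4 = 3)
    (htau : M.divisors.card = 2 * (M.divisors.filter fun d => d * d < M).card) :
    Odd ((M.divisors.filter fun d => d * d < M).card) ↔
      ∃ p a m : ℕ, p.Prime ∧ 0 < m ∧ ¬ p ∣ m ∧ M = p ^ (4 * a + 1) * m ^ 2 := by
  have hM0 : M ≠ 0 := by omega
  set s := (M.divisors.filter fun d => d * d < M).card with hs
  have hs0 : s ≠ 0 := by
    have h1 : (1 : ℕ) ∈ M.divisors.filter fun d => d * d < M := by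
      simp only [Finset.mem_filter, Nat.mem_divisors]
      exact ⟨⟨one_dvd M, hM0⟩, by omega⟩
    intro hc
    rw [hs] at hc
    exact Finset.notMem_empty 1 (Finset.card_eq_zero.mp hc ▸ h1)
  have hv : Odd s ↔ (M.divisors.card).factorization 2 = 1 := by
    rw [htau, Nat.factorization_mul (by norm_num) hs0, Finsupp.add_apply,
      Nat.Prime.factorization_self Nat.prime_two]
    have hOdd : Odd s ↔ s.factorization 2 = 0 := by
      rw [Nat.factorization_eq_zero_iff, Nat.odd_iff]
      constructor
      · intro h; right; left; omega
      · rintro (h | h | h)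
        · exact absurd Nat.prime_two h
        · omega
        · omega
    rw [hOdd]
    omega
  constructor
  · intro hOdds
    have hv2 := hv.mp hOdds
    rw [Nat.card_divisors hM0] at hv2
    rw [Nat.factorization_prod (fun p _ => Nat.succ_ne_zero _)] at hv2
    rw [Finset.sum_apply'] at hv2
    obtain ⟨p, hps, hp1, hrest⟩ := sum_eq_one_extract hv2
    have hp : p.Prime := Nat.prime_of_mem_primeFactors hps
    have hep : M.factorization p % 4 = 1 := (v2_eq_one_iff _).mp hp1
    set a := M.factorization p / 4 with ha
    have hepa : M.factorization p = 4 * a + 1 := by omega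
    set m' := M / p ^ (M.factorization p) with hm'
    have hsplit : p ^ (M.factorization p) * m' = M :=
      Nat.ordProj_mul_ordCompl_eq_self M p
    have hm'0 : m' ≠ 0 := (Nat.ordCompl_pos p hM0).ne'
    have hpm' : ¬ p ∣ m' := Nat.not_dvd_ordCompl hp hM0
    have heven : ∀ q, Even (m'.factorization q) := by
      intro q
      have hfac : m'.factorization = M.factorization.erase p :=
        Nat.factorization_ordCompl M p
      rw [hfac]
      by_cases hqp : q = p
      · subst hqp; rw [Finsupp.erase_same]; exact Even.zero
      · rw [Finsupp.erase_ne hqp]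
        by_cases hqs : q ∈ M.primeFactors
        · have := hrest q hqs hqp
          have := (v2_eq_zero_iff _).mp this
          rw [Nat.even_iff]; omega
        · rw [← Nat.support_factorization, Finsupp.notMem_support_iff] at hqs
          rw [hqs]; exact Even.zero
    obtain ⟨m, hm0, hmeq⟩ := sq_of_even_factorization m' hm'0 heven
    refine ⟨p, a, m, hp, hm0, ?_, ?_⟩
    · intro hc
      rw [hmeq] at hpm'
      exact hpm' (dvd_pow hc two_ne_zero)
    · rw [← hsplit, hepa, hmeq]
  · rintro ⟨p, a, m, hp, hm0, hpm, hMeq⟩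
    have hco : Nat.Coprime (p ^ (4 * a + 1)) (m ^ 2) :=
      Nat.Coprime.pow _ _ ((Nat.Prime.coprime_iff_not_dvd hp).mpr hpm)
    have htau2 : M.divisors.card = (4 * a + 2) * (m ^ 2).divisors.card := by
      rw [hMeq, hco.card_divisors_mul, card_divisors_prime_pow' hp]
    obtain ⟨u, hu⟩ := odd_card_divisors_sq m hm0
    have hprod : (4 * a + 2) * (m ^ 2).divisors.card
        = 2 * ((2 * a + 1) * (m ^ 2).divisors.card) := by ring
    have hseq : s = (2 * a + 1) * (m ^ 2).divisors.card := by
      rw [htau2, hprod] at htau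
      omega
    rw [hseq]
    exact (odd_two_mul_add_one a).mul (odd_card_divisors_sq m hm0)

end MockAux

/-- For `n ≥ 1`, `c(V₁⁽⁸⁾;n)` is odd iff `4n − 1 = p^(4a+1)·m²` for some prime `p`,
`a ≥ 0` and positive `m` with `p ∤ m`. -/
theorem mockV18_parity (n : ℕ) (hn : 1 ≤ n) :
    Odd (PowerSeries.coeff n mockV18) ↔
      ∃ p a m : ℕ, p.Prime ∧ 0 < m ∧ ¬ p ∣ m ∧ 4 * n - 1 = p ^ (4 * a + 1) * m ^ 2 := by
  rw [MockAux.odd_coeff_iff, MockAux.count_eq_small n hn]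
  exact MockAux.small_odd_iff (4 * n - 1) (by omega)
    (MockAux.card_divisors_eq_two_mul (4 * n - 1) (by omega))
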